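/- The First-UIP-Nogood of a conflict graph—the conflict nogood of the cut placing exactly the literals on some path from the First-UIP to a conflicting literal (excluding the First-UIP) on the conflict side—contains the complement-free set of predecessors such that exactly one of its literals (the First-UIP) is at the conflict decision level. -/

import Mathlib

inductive Lit (V : Type) where
  | pos : V → Lit V
  | neg : V → Lit V
deriving DecidableEq

def Lit.compl {V : Type} : Lit V → Lit V
  | .pos v => .neg v
  | .neg v => .pos v

/-- `l` is a (directed) path from `a` to `b` along the edge relation `E`. -/
def IsPath {α : Type} (E : α → α → Prop) (l : List α) (a b : α) : Prop :=
  l.Chain' E ∧ l.head? = some a ∧ l.getLast? = some b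

section Aux
variable {α : Type} {E : α → α → Prop}

/-- from a chain list, head reaches every member -/
lemma chain'_head_reach : ∀ (l : List α), l.Chain' E → ∀ a, l.head? = some a →
    ∀ x ∈ l, Relation.ReflTransGen E a x := by
  intro l
  induction l with
  | nil => intro _ a h; simp at h
  | cons y t ih =>
    intro hch a ha x hx
    simp at ha; subst ha
    rcases List.mem_cons.1 hx with rfl | hxt
    · exact .refl
    · match t, hxt with
      | c :: t', hxt =>
        have h1 : E y c := (List.isChain_cons_cons.1 hch).1
        have h2 := ih (List.isChain_cons_cons.1 hch).2 c rfl x hxt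
        exact Relation.ReflTransGen.head h1 h2

/-- every member of a chain list reaches the last element -/
lemma chain'_mem_reach_last : ∀ (l : List α), l.Chain' E → ∀ b, l.getLast? = some b →
    ∀ x ∈ l, Relation.ReflTransGen E x b := by
  intro l
  induction l with
  | nil => intro _ b h; simp at h
  | cons y t ih =>
    intro hch b hb x hx
    match t with
    | [] =>
      simp at hb hx; subst hb; subst hx; exact .refl
    | c :: t' =>
      have h1 : E y c := (List.isChain_cons_cons.1 hch).1
      have hch' := (List.isChain_cons_cons.1 hch).2
      have hb' : (c :: t').getLast? = some b := by
        rw [List.getLast?_cons_cons] at hb; exact hb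
      rcases List.mem_cons.1 hx with rfl | hxt
      · exact Relation.ReflTransGen.head h1 (ih hch' b hb' c List.mem_cons_self)
      · exact ih hch' b hb' x hxt

lemma chain_chain' {a : α} {l : List α} (h : List.Chain E a l) : List.Chain' E (a :: l) := by
  exact h

/-- turn a ReflTransGen into a path list -/
lemma mk_path {a b : α} (h : Relation.ReflTransGen E a b) : ∃ l, IsPath E l a b := by
  obtain ⟨l, hch, hlast⟩ := List.exists_isChain_cons_of_relationReflTransGen h
  refine ⟨a :: l, chain_chain' hch, by simp, ?_⟩
  rw [List.getLast?_eq_getLast (by simp), hlast]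

lemma compl_ne {V : Type} (l : Lit V) : l ≠ l.compl := by
  cases l <;> simp [Lit.compl]

lemma transGen_of_ne {a b : α} (h : Relation.ReflTransGen E a b) (hne : a ≠ b) :
    Relation.TransGen E a b := by
  rcases h.cases_head with rfl | ⟨c, hac, hcb⟩
  · exact absurd rfl hne
  · exact Relation.TransGen.head' hac hcb

end Aux

/-- A UIP: a node through which every path from the decision literal `σd`
to a conflicting literal passes. -/
def IsUIP {V : Type} (nodes : Finset (Lit V)) (E : Lit V → Lit V → Prop)
    (σ σd u : Lit V) : Prop :=
  u ∈ nodes ∧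
  ∀ (l : List (Lit V)) (c : Lit V), (c = σ ∨ c = Lit.compl σ) →
    IsPath E l σd c → u ∈ l

/-- the First-UIP-Nogood of a finite level-aware conflict
graph — the conflict nogood of the cut placing exactly the non-`u` literals
on directed paths from the First-UIP `u` to a conflicting literal on the
conflict side — contains `u`, and `u` is its only literal at the conflict
decision level `d`. -/
theorem stmt15 {V : Type} [DecidableEq V]
    (nodes : Finset (Lit V)) (E : Lit V → Lit V → Prop) (dl : Lit V → ℕ)
    (σ σd : Lit V) (d : ℕ) (hdl : dl σ = d)
    (hσ : σ ∈ nodes) (hσc : σ.compl ∈ nodes) (hσd : σd ∈ nodes)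
    (hE : ∀ a b, E a b → a ∈ nodes ∧ b ∈ nodes)
    (hacyc : ∀ a, ¬ Relation.TransGen E a a)
    (hdlσd : dl σd = d) (hdlσc : dl σ.compl = d)
    (hσne : σ ≠ σd) (hσcne : σ.compl ≠ σd)
    (hdec : ∀ a, ¬ E a σd)
    (hmax : ∀ x ∈ nodes, dl x ≤ d)
    -- level-awareness
    (hla : (∃ p, E p σ ∧ dl p = d) ∧ (∃ p, E p σ.compl ∧ dl p = d))
    -- predecessors of implied literals form reasons; every node of level `d`
    -- other than the decision literal has a predecessor at level `d`
    (hreason : ∀ x ∈ nodes, dl x = d → x ≠ σd →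
        ∃ p ∈ nodes, E p x ∧ dl p = d)
    (hreach : Relation.ReflTransGen E σd σ ∧ Relation.ReflTransGen E σd σ.compl)
    -- `u` is the First-UIP: a UIP from which no other UIP is reachable
    (u : Lit V) (hu : IsUIP nodes E σ σd u)
    (hfirst : ∀ v : Lit V, IsUIP nodes E σ σd v → v ≠ u → ¬ Relation.TransGen E u v)
    -- the conflict side of the First-UIP-Cut and its conflict nogood
    (C : Set (Lit V))
    (hC : C = {x | x ≠ u ∧ Relation.ReflTransGen E u x ∧
        (Relation.ReflTransGen E x σ ∨ Relation.ReflTransGen E x σ.compl)})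
    (nogood : Set (Lit V))
    (hng : nogood = {a | a ∈ nodes ∧ a ∉ C ∧ ∃ b ∈ C, E a b}) :
    u ∈ nogood ∧ ∀ a ∈ nogood, dl a = d → a = u := by
  obtain ⟨hun, hUIP⟩ := hu
  classical
  -- reachability of u to conflicting literals
  have hpathσ : ∃ l, IsPath E l σd σ := mk_path hreach.1
  have hpathσc : ∃ l, IsPath E l σd σ.compl := mk_path hreach.2
  obtain ⟨l1, hl1⟩ := hpathσ
  obtain ⟨l2, hl2⟩ := hpathσc
  have hu1 : u ∈ l1 := hUIP l1 σ (Or.inl rfl) hl1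
  have hu2 : u ∈ l2 := hUIP l2 σ.compl (Or.inr rfl) hl2
  have huσ : Relation.ReflTransGen E u σ := chain'_mem_reach_last l1 hl1.1 σ hl1.2.2 u hu1
  have huσc : Relation.ReflTransGen E u σ.compl := chain'_mem_reach_last l2 hl2.1 σ.compl hl2.2.2 u hu2
  -- helper: a nontrivial reach from u to a conflicting literal gives a first step into C
  have step : ∀ c : Lit V, (c = σ ∨ c = σ.compl) → Relation.ReflTransGen E u c → u ≠ c →
      ∃ b ∈ C, E u b := by
    intro c hc hr hne
    rcases hr.cases_head with rfl | ⟨b, hub, hbc⟩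
    · exact absurd rfl hne
    · refine ⟨b, ?_, hub⟩
      have hbu : b ≠ u := by
        rintro rfl
        exact hacyc b (Relation.TransGen.single hub)
      rw [hC]
      refine ⟨hbu, Relation.ReflTransGen.single hub, ?_⟩
      rcases hc with rfl | rfl
      · exact Or.inl hbc
      · exact Or.inr hbc
  have hexb : ∃ b ∈ C, E u b := by
    by_cases huσeq : u = σ
    · exact step σ.compl (Or.inr rfl) huσc (by rw [huσeq]; exact compl_ne σ)
    · exact step σ (Or.inl rfl) huσ huσeq
  have hunotC : u ∉ C := by rw [hC]; intro h; exact h.1 rfl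
  have humem : u ∈ nogood := by rw [hng]; exact ⟨hun, hunotC, hexb⟩
  -- key: every level-d node is reachable from σd
  have key : ∀ n (x : Lit V), x ∈ nodes → dl x = d →
      (Finset.filter (fun y => Relation.TransGen E y x) nodes).card ≤ n →
      Relation.ReflTransGen E σd x := by
    intro n
    induction n with
    | zero =>
      intro x hx hdx hcard
      by_cases hxd : x = σd
      · subst hxd; exact .refl
      · obtain ⟨p, hp, hpx, _⟩ := hreason x hx hdx hxd
        have : p ∈ Finset.filter (fun y => Relation.TransGen E y x) nodes :=
          Finset.mem_filter.2 ⟨hp, Relation.TransGen.single hpx⟩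
        have := Finset.card_pos.2 ⟨p, this⟩
        omega
    | succ n ih =>
      intro x hx hdx hcard
      by_cases hxd : x = σd
      · subst hxd; exact .refl
      · obtain ⟨p, hp, hpx, hdp⟩ := hreason x hx hdx hxd
        have hsub : Finset.filter (fun y => Relation.TransGen E y p) nodes ⊂
            Finset.filter (fun y => Relation.TransGen E y x) nodes := by
          constructor
          · intro y hy
            rcases Finset.mem_filter.1 hy with ⟨hy1, hy2⟩
            exact Finset.mem_filter.2 ⟨hy1, hy2.tail hpx⟩
          · intro hcon
            have hpmem : p ∈ Finset.filter (fun y => Relation.TransGen E y x) nodes :=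
              Finset.mem_filter.2 ⟨hp, Relation.TransGen.single hpx⟩
            have := Finset.mem_filter.1 (hcon hpmem)
            exact hacyc p this.2
        have hlt := Finset.card_lt_card hsub
        have : (Finset.filter (fun y => Relation.TransGen E y p) nodes).card ≤ n := by omega
        exact (ih p hp hdp this).tail hpx
  refine ⟨humem, ?_⟩
  intro a ha hda
  by_contra hau
  rw [hng] at ha
  obtain ⟨han, hanC, b, hbC, hab⟩ := ha
  rw [hC] at hbC
  obtain ⟨hbu, hub, hbreach⟩ := hbC
  -- a reaches a conflicting literal
  obtain ⟨c, hc, hbc⟩ : ∃ c, (c = σ ∨ c = Lit.compl σ) ∧ Relation.ReflTransGen E b c := by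
    rcases hbreach with h | h
    · exact ⟨σ, Or.inl rfl, h⟩
    · exact ⟨σ.compl, Or.inr rfl, h⟩
  have hanotreach : ¬ Relation.ReflTransGen E u a := by
    intro hreachua
    apply hanC
    rw [hC]
    refine ⟨hau, hreachua, ?_⟩
    have : Relation.ReflTransGen E a c := Relation.ReflTransGen.head hab hbc
    rcases hc with rfl | rfl
    · exact Or.inl this
    · exact Or.inr this
  -- build a path σd → a → b → c
  have hσda : Relation.ReflTransGen E σd a :=
    key (Finset.filter (fun y => Relation.TransGen E y a) nodes).card a han hda le_rfl
  obtain ⟨la, hla1⟩ := mk_path hσda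
  obtain ⟨lb, hlb1⟩ := mk_path hbc
  have hla_ne : la ≠ [] := by intro h; rw [h] at hla1; simp [IsPath] at hla1
  have hlb_ne : lb ≠ [] := by intro h; rw [h] at hlb1; simp [IsPath] at hlb1
  have hpath : IsPath E (la ++ lb) σd c := by
    refine ⟨?_, ?_, ?_⟩
    · refine List.IsChain.append hla1.1 hlb1.1 ?_
      intro x hx y hy
      rw [hla1.2.2] at hx
      rw [hlb1.2.1] at hy
      simp at hx hy; subst hx; subst hy
      exact hab
    · rw [List.head?_append, hla1.2.1]; rfl
    · rw [List.getLast?_append, hlb1.2.2]; rfl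
  have humem2 : u ∈ la ++ lb := hUIP (la ++ lb) c hc hpath
  rcases List.mem_append.1 humem2 with h | h
  · -- u in la : u reaches a
    exact hanotreach (chain'_mem_reach_last la hla1.1 a hla1.2.2 u h)
  · -- u in lb : b reaches u, so cycle
    have hbru : Relation.ReflTransGen E b u := chain'_head_reach lb hlb1.1 b hlb1.2.1 u h
    have : Relation.TransGen E u u :=
      Relation.TransGen.trans_right hub (transGen_of_ne hbru hbu)
    exact hacyc u this
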